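/- For α ≥ 0 an integer and z > 0: lim_{n→∞} n^{−α}·𝓛_n^α(z/n) = z^{−α/2}·J_α(2√z), where J_α is the Bessel function of the first kind. -/

import Mathlib

open Real Finset Filter Topology

/-- Generalized Laguerre polynomial `𝓛_n^α(x)`. -/
noncomputable def glag (α : ℝ) (n : ℕ) (x : ℝ) : ℝ :=
  ∑ k ∈ Finset.range (n + 1),
    (-1 : ℝ) ^ k * Real.Gamma ((n : ℝ) + α + 1) /
      (Real.Gamma ((k : ℝ) + α + 1) * (Nat.factorial (n - k) : ℝ) * (Nat.factorial k : ℝ)) * x ^ k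

/-- Rescaled (Sonine) Laguerre polynomial `L_n^α(x) = 𝓛_n^α(x)/Γ(n+α+1)`. -/
noncomputable def slag (α : ℝ) (n : ℕ) (x : ℝ) : ℝ :=
  glag α n x / Real.Gamma ((n : ℝ) + α + 1)

/-- Rescaled Laguerre polynomial with integer index, zero for negative index. -/
noncomputable def slagZ (α : ℝ) (m : ℤ) (x : ℝ) : ℝ :=
  if 0 ≤ m then slag α m.toNat x else 0

/-- The Bessel function of the first kind J_α, defined by its power series. -/
noncomputable def besselJ (α : ℝ) (x : ℝ) : ℝ :=
  ∑' m : ℕ, ((-1 : ℝ) ^ m / ((Nat.factorial m : ℝ) * Real.Gamma ((m : ℝ) + α + 1))) *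
    (x / 2) ^ (2 * (m : ℝ) + α)

-- the normalized descending-factorial product
noncomputable def mhP (α k n : ℕ) : ℝ := ∏ i ∈ Finset.range (k + α), (((n:ℝ) + α - i) / n)

lemma mhP_tendsto (α k : ℕ) : Tendsto (fun n : ℕ => mhP α k n) atTop (𝓝 1) := by
  have : Tendsto (fun n : ℕ => mhP α k n) atTop (𝓝 (∏ _i ∈ Finset.range (k + α), (1:ℝ))) := by
    apply tendsto_finset_prod
    intro i _
    have h1 : Tendsto (fun n : ℕ => ((α:ℝ) - i) / n) atTop (𝓝 0) :=
      Tendsto.div_atTop tendsto_const_nhds tendsto_natCast_atTop_atTop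
    have h2 : Tendsto (fun n : ℕ => 1 + ((α:ℝ) - i) / n) atTop (𝓝 (1 + 0)) :=
      tendsto_const_nhds.add h1
    rw [add_zero] at h2
    apply h2.congr'
    filter_upwards [eventually_ge_atTop 1] with n hn
    have hn0 : (n:ℝ) ≠ 0 := by positivity
    field_simp
    ring
  simpa using this

lemma mhP_eq (α k n : ℕ) (hk : k ≤ n) :
    mhP α k n = ((n + α).descFactorial (k + α) : ℝ) / (n:ℝ) ^ (k + α) := by
  rw [mhP, Nat.descFactorial_eq_prod_range]
  push_cast
  rw [Finset.prod_div_distrib, Finset.prod_const]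
  rw [Finset.card_range]
  congr 1
  apply Finset.prod_congr rfl
  intro i hi
  rw [Finset.mem_range] at hi
  have : i ≤ n + α := by omega
  push_cast [Nat.cast_sub this]
  ring

lemma mhP_le (α k n : ℕ) (hα : α ≤ n) (hk : k ≤ n) (hn : 1 ≤ n) : mhP α k n ≤ 2 ^ (k + α) := by
  rw [mhP]
  calc ∏ i ∈ Finset.range (k + α), (((n:ℝ) + α - i) / n)
      ≤ ∏ _i ∈ Finset.range (k + α), (2:ℝ) := by
        apply Finset.prod_le_prod
        · intro i hi
          rw [Finset.mem_range] at hi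
          apply div_nonneg _ (by positivity)
          have h1 : i < n + α := by omega
          have h2 : (i:ℝ) < ((n + α : ℕ) : ℝ) := by exact_mod_cast h1
          push_cast at h2
          linarith
        · intro i _
          rw [div_le_iff₀ (by positivity : (0:ℝ) < n)]
          have h3 : (α:ℝ) ≤ n := by exact_mod_cast hα
          have h4 : (i:ℝ) ≥ 0 := by positivity
          linarith
    _ = 2 ^ (k + α) := by rw [Finset.prod_const, Finset.card_range]

lemma mhP_nonneg (α k n : ℕ) (hk : k ≤ n) : 0 ≤ mhP α k n := by
  apply Finset.prod_nonneg
  intro i hi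
  rw [Finset.mem_range] at hi
  apply div_nonneg _ (by positivity)
  have h1 : i < n + α := by omega
  have h2 : (i:ℝ) < ((n + α : ℕ) : ℝ) := by exact_mod_cast h1
  push_cast at h2
  linarith

lemma besselJ_eq (α : ℕ) (z : ℝ) (hz : 0 < z) :
    z ^ (-(α : ℝ) / 2) * besselJ (α : ℝ) (2 * Real.sqrt z) =
    ∑' m : ℕ, (-1:ℝ)^m * z^m / ((Nat.factorial m : ℝ) * Real.Gamma ((m:ℝ) + α + 1)) := by
  have key : ∀ m : ℕ, (2 * Real.sqrt z / 2) ^ (2*(m:ℝ) + α) = z ^ m * z ^ ((α:ℝ)/2) := by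
    intro m
    rw [show (2 : ℝ) * Real.sqrt z / 2 = Real.sqrt z by ring,
      show 2*(m:ℝ) + α = ((2*m + α : ℕ) : ℝ) by push_cast; ring, Real.rpow_natCast,
      pow_add, pow_mul, Real.sq_sqrt hz.le]
    congr 1
    rw [← Real.rpow_natCast (Real.sqrt z) α, Real.sqrt_eq_rpow, ← Real.rpow_mul hz.le]
    congr 1; ring
  rw [besselJ]
  simp only [key]
  have : ∀ m : ℕ, ((-1:ℝ) ^ m / ((Nat.factorial m : ℝ) * Real.Gamma ((m:ℝ) + α + 1))) *
      (z ^ m * z ^ ((α:ℝ)/2)) =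
      ((-1:ℝ)^m * z^m / ((Nat.factorial m : ℝ) * Real.Gamma ((m:ℝ) + α + 1))) * z ^ ((α:ℝ)/2) := by
    intro m; ring
  simp only [this]
  rw [tsum_mul_right, ← mul_assoc, mul_comm (z ^ (-(α:ℝ)/2)), mul_assoc,
    ← Real.rpow_add hz, show -(α:ℝ)/2 + (α:ℝ)/2 = 0 by ring, Real.rpow_zero, mul_one]

lemma glag_eq (α : ℕ) (z : ℝ) (n : ℕ) (hn : 1 ≤ n) :
    (n:ℝ) ^ (-(α:ℝ)) * glag (α:ℝ) n (z / n) =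
    ∑ k ∈ Finset.range (n+1),
      (-1:ℝ)^k * z^k / ((Nat.factorial k : ℝ) * Real.Gamma ((k:ℝ)+α+1)) * mhP α k n := by
  rw [glag, Finset.mul_sum]
  apply Finset.sum_congr rfl
  intro k hk
  rw [Finset.mem_range, Nat.lt_succ_iff] at hk
  have hn0 : (0:ℝ) < n := by exact_mod_cast hn
  rw [mhP_eq α k n hk]
  have hG : Real.Gamma ((n:ℝ) + α + 1) = ((n+α).factorial : ℝ) := by
    rw [show (n:ℝ) + α + 1 = ((n + α : ℕ) : ℝ) + 1 by push_cast; ring,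
      Real.Gamma_nat_eq_factorial]
  have hfac : (n - k).factorial * ((n+α).descFactorial (k+α)) = (n+α).factorial := by
    have h := Nat.factorial_mul_descFactorial (show k + α ≤ n + α by omega)
    rwa [show n + α - (k + α) = n - k by omega] at h
  have hGk : (0:ℝ) < Real.Gamma ((k:ℝ)+α+1) :=
    Real.Gamma_pos_of_pos (by positivity)
  rw [hG, ← hfac, Real.rpow_neg hn0.le, Real.rpow_natCast]
  have h1 : ((n-k).factorial : ℝ) ≠ 0 := by positivity
  have h2 : ((Nat.factorial k : ℕ) : ℝ) ≠ 0 := by positivity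
  push_cast
  rw [div_pow, pow_add]
  field_simp

/-- Mehler–Heine asymptotics: n^{−α}·𝓛_n^α(z/n) → z^{−α/2}·J_α(2√z) as n → ∞. -/
theorem laguerre_mehler_heine (α : ℕ) (z : ℝ) (hz : 0 < z) :
    Filter.Tendsto (fun n : ℕ => (n : ℝ) ^ (-(α : ℝ)) * glag (α : ℝ) n (z / (n : ℝ)))
      Filter.atTop
      (nhds (z ^ (-(α : ℝ) / 2) * besselJ (α : ℝ) (2 * Real.sqrt z))) := by
  set g : ℕ → ℝ := fun k => (-1:ℝ)^k * z^k / ((Nat.factorial k : ℝ) * Real.Gamma ((k:ℝ)+α+1))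
    with hg
  set f : ℕ → ℕ → ℝ := fun n k => if k ≤ n ∧ α ≤ n ∧ 1 ≤ n then g k * mhP α k n else 0 with hf
  have hGpos : ∀ k : ℕ, (0:ℝ) < Real.Gamma ((k:ℝ)+α+1) :=
    fun k => Real.Gamma_pos_of_pos (by positivity)
  have hGone : ∀ k : ℕ, (1:ℝ) ≤ Real.Gamma ((k:ℝ)+α+1) := by
    intro k
    rw [show (k:ℝ) + α + 1 = ((k + α : ℕ) : ℝ) + 1 by push_cast; ring,
      Real.Gamma_nat_eq_factorial]
    exact_mod_cast Nat.factorial_pos (k+α)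
  have h_sum : Summable (fun k : ℕ => (2*z)^k / (Nat.factorial k : ℝ) * 2^α) :=
    (Real.summable_pow_div_factorial (2*z)).mul_right _
  have h_bound : ∀ n k, ‖f n k‖ ≤ (2*z)^k / (Nat.factorial k : ℝ) * 2^α := by
    intro n k
    simp only [hf]
    by_cases h : k ≤ n ∧ α ≤ n ∧ 1 ≤ n
    · rw [if_pos h]
      obtain ⟨hk, hα, hn⟩ := h
      have hP0 := mhP_nonneg α k n hk
      have hPle := mhP_le α k n hα hk hn
      rw [Real.norm_eq_abs, abs_mul, abs_of_nonneg hP0, hg]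
      have hgabs : |(-1:ℝ)^k * z^k / ((Nat.factorial k : ℝ) * Real.Gamma ((k:ℝ)+α+1))|
          = z^k / ((Nat.factorial k : ℝ) * Real.Gamma ((k:ℝ)+α+1)) := by
        rw [abs_div, abs_mul, abs_mul, abs_pow, abs_neg, abs_one, one_pow, one_mul,
          abs_of_nonneg (le_of_lt (pow_pos hz k)),
          abs_of_nonneg (Nat.cast_nonneg _), abs_of_nonneg (hGpos k).le]
      rw [hgabs]
      calc z^k / ((Nat.factorial k : ℝ) * Real.Gamma ((k:ℝ)+α+1)) * mhP α k n
          ≤ z^k / ((Nat.factorial k : ℝ) * 1) * 2^(k+α) := by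
            apply mul_le_mul _ hPle hP0 (by positivity)
            apply div_le_div_of_nonneg_left (by positivity) (by positivity)
            exact mul_le_mul_of_nonneg_left (hGone k) (Nat.cast_nonneg _)
        _ = (2*z)^k / (Nat.factorial k : ℝ) * 2^α := by
            rw [mul_one, pow_add, mul_pow]; ring
    · simp only [h, if_false, norm_zero]
      positivity
  have h_lim : ∀ k, Filter.Tendsto (f · k) Filter.atTop (𝓝 (g k)) := by
    intro k
    have h1 : Filter.Tendsto (fun n => g k * mhP α k n) Filter.atTop (𝓝 (g k * 1)) :=
      tendsto_const_nhds.mul (mhP_tendsto α k)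
    rw [mul_one] at h1
    apply h1.congr'
    filter_upwards [Filter.eventually_ge_atTop (max k (max α 1))] with n hn
    simp only [hf]
    simp only [if_pos (show k ≤ n ∧ α ≤ n ∧ 1 ≤ n by
      refine ⟨le_trans (le_max_left _ _) hn, ?_, ?_⟩
      · exact le_trans (le_trans (le_max_left _ _) (le_max_right _ _)) hn
      · exact le_trans (le_trans (le_max_right _ _) (le_max_right _ _)) hn)]
  have main := tendsto_tsum_of_dominated_convergence h_sum h_lim
    (Filter.Eventually.of_forall h_bound)
  rw [← besselJ_eq α z hz] at main
  apply main.congr'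
  filter_upwards [Filter.eventually_ge_atTop (max α 1)] with n hn
  have hα : α ≤ n := le_trans (le_max_left _ _) hn
  have hn1 : 1 ≤ n := le_trans (le_max_right _ _) hn
  rw [tsum_eq_sum (s := Finset.range (n+1)) (by
    intro k hk
    rw [Finset.mem_range, Nat.lt_succ_iff] at hk
    simp only [hf]
    simp only [if_neg (by tauto : ¬(k ≤ n ∧ α ≤ n ∧ 1 ≤ n))]), glag_eq α z n hn1]
  apply Finset.sum_congr rfl
  intro k hk
  rw [Finset.mem_range, Nat.lt_succ_iff] at hk
  simp only [hf]
  simp only [if_pos (⟨hk, hα, hn1⟩ : k ≤ n ∧ α ≤ n ∧ 1 ≤ n)]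
  rfl
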